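/- Fix constants θ1 > θ0 > 0, let T > 0, define p(T) = e^{-θ1 T}/(θ0/θ1 + (1 - θ0/θ1)e^{-θ1 T}), and define p^T(D) = e^{-θ1 D} + p(T)(1 - θ0/θ1)(1 - e^{-θ1 D}) for 0 ≤ D ≤ T and p^T(D) = p(T)·e^{-θ0(D - T)} for D ≥ T. Then D ↦ p^T(D) is continuously differentiable on (0, ∞) (in particular the two branches agree in value and in first derivative at D = T), is twice continuously differentiable on (0, T) and on (T, ∞), satisfies (p^T)''(D) + θ1 (p^T)'(D) = 0 for D ∈ (0, T) and (p^T)''(D) + θ0 (p^T)'(D) = 0 for D ∈ (T, ∞), and satisfies p^T(0) = 1 and p^T(D) → 0 as D → ∞. -/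

import Mathlib

open Set Filter

/-- Analytic characterization of the interruption probability `p^T` of the threshold policy
(Theorem 7, fluid model). With `θ1 > θ0 > 0`, `T > 0`,
`p(T) = exp (-θ1 T) / (θ0/θ1 + (1 - θ0/θ1) exp (-θ1 T))`, and `p^T` defined piecewise by
`p^T(D) = exp (-θ1 D) + p(T) (1 - θ0/θ1) (1 - exp (-θ1 D))` for `D ≤ T` and
`p^T(D) = p(T) exp (-θ0 (D - T))` for `D ≥ T`: `p^T` is continuously differentiable on
`(0, ∞)` (in particular the two branches agree in value and first derivative at `T`), is
twice continuously differentiable on `(0, T)` and on `(T, ∞)`, satisfies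
`(p^T)'' + θ1 (p^T)' = 0` on `(0, T)` and `(p^T)'' + θ0 (p^T)' = 0` on `(T, ∞)`,
`p^T(0) = 1`, and `p^T(D) → 0` as `D → ∞`. -/
theorem threshold_interruption_probability_characterization (θ0 θ1 T : ℝ)
    (hθ0 : 0 < θ0) (hθ01 : θ0 < θ1) (hT : 0 < T)
    (pT : ℝ) (hpT : pT = Real.exp (-θ1 * T) / (θ0 / θ1 + (1 - θ0 / θ1) * Real.exp (-θ1 * T)))
    (low high pTfun : ℝ → ℝ)
    (hlow : ∀ D : ℝ, low D = Real.exp (-θ1 * D) + pT * (1 - θ0 / θ1) * (1 - Real.exp (-θ1 * D)))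
    (hhigh : ∀ D : ℝ, high D = pT * Real.exp (-θ0 * (D - T)))
    (hfun : ∀ D : ℝ, pTfun D = if D ≤ T then low D else high D) :
    low T = high T ∧ deriv low T = deriv high T ∧
    ContDiffOn ℝ 1 pTfun (Ioi 0) ∧
    ContDiffOn ℝ 2 pTfun (Ioo 0 T) ∧ ContDiffOn ℝ 2 pTfun (Ioi T) ∧
    (∀ D ∈ Ioo 0 T, deriv (deriv pTfun) D + θ1 * deriv pTfun D = 0) ∧
    (∀ D ∈ Ioi T, deriv (deriv pTfun) D + θ0 * deriv pTfun D = 0) ∧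
    pTfun 0 = 1 ∧
    Tendsto pTfun atTop (nhds 0) := by
  have hθ1 : (0:ℝ) < θ1 := hθ0.trans hθ01
  have hθ1ne : θ1 ≠ 0 := ne_of_gt hθ1
  set c : ℝ := pT * (1 - θ0 / θ1) with hc
  set E : ℝ := Real.exp (-θ1 * T) with hE
  have hEpos : 0 < E := Real.exp_pos _
  have hr1 : θ0 / θ1 < 1 := (div_lt_one hθ1).2 hθ01
  have hrpos : 0 < θ0 / θ1 := div_pos hθ0 hθ1
  have hdpos : 0 < θ0 / θ1 + (1 - θ0 / θ1) * E :=
    add_pos hrpos (mul_pos (by linarith) hEpos)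
  have hdne : θ0 / θ1 + (1 - θ0 / θ1) * E ≠ 0 := ne_of_gt hdpos
  have hd2pos : 0 < E * θ1 - E * θ0 + θ0 := by nlinarith [mul_pos hEpos (sub_pos.mpr hθ01)]
  have hd2ne : E * θ1 - E * θ0 + θ0 ≠ 0 := ne_of_gt hd2pos
  have hpT' : pT = E * θ1 / (E * θ1 - E * θ0 + θ0) := by
    rw [hpT, div_eq_div_iff hdne hd2ne]
    field_simp
    ring
  -- explicit forms
  have hlowe : low = fun D => Real.exp (-θ1 * D) + c * (1 - Real.exp (-θ1 * D)) :=
    funext fun D => hlow D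
  have hhighe : high = fun D => pT * Real.exp (-θ0 * (D - T)) := funext fun D => hhigh D
  -- derivatives of the branches
  have hexp1 : ∀ D : ℝ, HasDerivAt (fun x => Real.exp (-θ1 * x))
      (Real.exp (-θ1 * D) * (-θ1)) D := by
    intro D
    simpa using ((hasDerivAt_id D).const_mul (-θ1)).exp
  have hlowd : ∀ D : ℝ, HasDerivAt low ((1 - c) * (Real.exp (-θ1 * D) * (-θ1))) D := by
    intro D
    rw [hlowe]
    have h := (hexp1 D).add (((hasDerivAt_const D (1:ℝ)).sub (hexp1 D)).const_mul c)
    refine HasDerivAt.congr_deriv h ?_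
    ring
  have hhighd : ∀ D : ℝ, HasDerivAt high (pT * (Real.exp (-θ0 * (D - T)) * (-θ0))) D := by
    intro D
    rw [hhighe]
    have hin : HasDerivAt (fun x : ℝ => -θ0 * (x - T)) (-θ0) D := by
      simpa using ((hasDerivAt_id D).sub_const T).const_mul (-θ0)
    exact (hin.exp).const_mul pT
  -- value matching at T
  have hval : low T = high T := by
    rw [hlow, hhigh, sub_self, mul_zero, Real.exp_zero, mul_one]
    simp only [hc]
    rw [← hE, hpT']
    field_simp [show E * (θ1 - θ0) + θ0 ≠ 0 by linarith]
    ring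
  -- derivative matching at T
  have hder : (1 - c) * (Real.exp (-θ1 * T) * (-θ1))
      = pT * (Real.exp (-θ0 * (T - T)) * (-θ0)) := by
    rw [sub_self, mul_zero, Real.exp_zero, one_mul]
    simp only [hc]
    rw [← hE, hpT']
    field_simp [show E * (θ1 - θ0) + θ0 ≠ 0 by linarith]
    ring
  -- derivative of pTfun everywhere
  have hdAll : ∀ D : ℝ, HasDerivAt pTfun
      (if D ≤ T then (1 - c) * (Real.exp (-θ1 * D) * (-θ1))
        else pT * (Real.exp (-θ0 * (D - T)) * (-θ0))) D := by
    intro D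
    rcases lt_trichotomy D T with hDT | hDT | hDT
    · rw [if_pos hDT.le]
      refine (hlowd D).congr_of_eventuallyEq ?_
      filter_upwards [Iio_mem_nhds hDT] with x hx
      rw [hfun x, if_pos (le_of_lt hx)]
    · subst hDT
      rw [if_pos le_rfl]
      have h1 : HasDerivWithinAt pTfun ((1 - c) * (Real.exp (-θ1 * D) * (-θ1))) (Iic D) D := by
        refine ((hlowd D).hasDerivWithinAt).congr (fun y hy => ?_) ?_
        · rw [hfun y, if_pos (mem_Iic.mp hy)]
        · rw [hfun D, if_pos le_rfl]
      have h2' := (hhighd D).hasDerivWithinAt (s := Ici D)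
      rw [← hder] at h2'
      have h2 : HasDerivWithinAt pTfun ((1 - c) * (Real.exp (-θ1 * D) * (-θ1))) (Ici D) D := by
        refine h2'.congr (fun y hy => ?_) ?_
        · rcases eq_or_lt_of_le (mem_Ici.mp hy) with hy' | hy'
          · rw [← hy', hfun D, if_pos le_rfl, hval]
          · rw [hfun y, if_neg (not_le.mpr hy')]
        · rw [hfun D, if_pos le_rfl, hval]
      have h3 := h1.union h2
      rwa [Iic_union_Ici, hasDerivWithinAt_univ] at h3
    · rw [if_neg (not_le.mpr hDT)]
      refine (hhighd D).congr_of_eventuallyEq ?_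
      filter_upwards [Ioi_mem_nhds hDT] with x hx
      rw [hfun x, if_neg (not_le.mpr hx)]
  have hderiv_eq : deriv pTfun = fun D =>
      (if D ≤ T then (1 - c) * (Real.exp (-θ1 * D) * (-θ1))
        else pT * (Real.exp (-θ0 * (D - T)) * (-θ0))) :=
    funext fun D => (hdAll D).deriv
  -- continuity of the derivative
  have hφcont : Continuous fun D =>
      (if D ≤ T then (1 - c) * (Real.exp (-θ1 * D) * (-θ1))
        else pT * (Real.exp (-θ0 * (D - T)) * (-θ0))) := by
    refine Continuous.if_le ?_ ?_ continuous_id continuous_const ?_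
    · fun_prop
    · fun_prop
    · intro x hx
      subst hx
      exact hder
  -- C¹ on (0, ∞)
  have cd1 : ContDiffOn ℝ 1 pTfun (Ioi 0) := by
    rw [show (1 : WithTop ℕ∞) = 0 + 1 from rfl,
      contDiffOn_succ_iff_deriv_of_isOpen isOpen_Ioi]
    refine ⟨fun x _ => (hdAll x).differentiableAt.differentiableWithinAt, ?_, ?_⟩
    · intro h; simp at h
    · rw [contDiffOn_zero, hderiv_eq]
      exact hφcont.continuousOn
  -- C² on the two open pieces
  have hlow2 : ContDiff ℝ 2 low := by
    rw [hlowe]; fun_prop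
  have hhigh2 : ContDiff ℝ 2 high := by
    rw [hhighe]; fun_prop
  have cd2 : ContDiffOn ℝ 2 pTfun (Ioo 0 T) := by
    refine (hlow2.contDiffOn).congr fun x hx => ?_
    rw [hfun x, if_pos hx.2.le]
  have cd3 : ContDiffOn ℝ 2 pTfun (Ioi T) := by
    refine (hhigh2.contDiffOn).congr fun x hx => ?_
    rw [hfun x, if_neg (not_le.mpr hx)]
  -- ODE on (0, T)
  have ode1 : ∀ D ∈ Ioo 0 T, deriv (deriv pTfun) D + θ1 * deriv pTfun D = 0 := by
    intro D hD
    have hev : deriv pTfun =ᶠ[nhds D] fun x => (1 - c) * (Real.exp (-θ1 * x) * (-θ1)) := by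
      rw [hderiv_eq]
      filter_upwards [Iio_mem_nhds hD.2] with x hx
      exact if_pos hx.le
    have h2 : HasDerivAt (fun x => (1 - c) * (Real.exp (-θ1 * x) * (-θ1)))
        ((1 - c) * ((Real.exp (-θ1 * D) * (-θ1)) * (-θ1))) D :=
      ((hexp1 D).mul_const (-θ1)).const_mul (1 - c)
    have h3 : deriv (deriv pTfun) D = (1 - c) * ((Real.exp (-θ1 * D) * (-θ1)) * (-θ1)) :=
      (h2.congr_of_eventuallyEq hev).deriv
    have h4 : deriv pTfun D = (1 - c) * (Real.exp (-θ1 * D) * (-θ1)) := by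
      rw [hderiv_eq]; exact if_pos hD.2.le
    rw [h3, h4]; ring
  -- ODE on (T, ∞)
  have ode2 : ∀ D ∈ Ioi T, deriv (deriv pTfun) D + θ0 * deriv pTfun D = 0 := by
    intro D hD
    have hev : deriv pTfun =ᶠ[nhds D] fun x => pT * (Real.exp (-θ0 * (x - T)) * (-θ0)) := by
      rw [hderiv_eq]
      filter_upwards [Ioi_mem_nhds hD] with x hx
      exact if_neg (not_le.mpr hx)
    have hin : ∀ x : ℝ, HasDerivAt (fun y : ℝ => Real.exp (-θ0 * (y - T)))
        (Real.exp (-θ0 * (x - T)) * (-θ0)) x := by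
      intro x
      simpa using (((hasDerivAt_id x).sub_const T).const_mul (-θ0)).exp
    have h2 : HasDerivAt (fun x => pT * (Real.exp (-θ0 * (x - T)) * (-θ0)))
        (pT * ((Real.exp (-θ0 * (D - T)) * (-θ0)) * (-θ0))) D :=
      ((hin D).mul_const (-θ0)).const_mul pT
    have h3 : deriv (deriv pTfun) D = pT * ((Real.exp (-θ0 * (D - T)) * (-θ0)) * (-θ0)) :=
      (h2.congr_of_eventuallyEq hev).deriv
    have h4 : deriv pTfun D = pT * (Real.exp (-θ0 * (D - T)) * (-θ0)) := by
      rw [hderiv_eq]; exact if_neg (not_le.mpr hD)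
    rw [h3, h4]; ring
  -- boundary value
  have hzero : pTfun 0 = 1 := by
    rw [hfun 0, if_pos hT.le, hlow 0]
    simp
  -- limit at infinity
  have hlim : Tendsto pTfun atTop (nhds 0) := by
    have hev : high =ᶠ[atTop] pTfun := by
      filter_upwards [eventually_gt_atTop T] with x hx
      rw [hfun x, if_neg (not_le.mpr hx)]
    have hsub : Tendsto (fun D : ℝ => D - T) atTop atTop :=
      (tendsto_atTop_add_const_right atTop (-T) tendsto_id).congr
        fun x => (sub_eq_add_neg x T).symm
    have h1 : Tendsto (fun D : ℝ => -θ0 * (D - T)) atTop atBot :=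
      (tendsto_const_mul_atBot_of_neg (by linarith : -θ0 < (0:ℝ))).2 hsub
    have h2 : Tendsto (fun D : ℝ => Real.exp (-θ0 * (D - T))) atTop (nhds 0) :=
      Real.tendsto_exp_atBot.comp h1
    have h3 : Tendsto high atTop (nhds 0) := by
      rw [hhighe]
      simpa using h2.const_mul pT
    exact h3.congr' hev
  exact ⟨hval, by rw [(hlowd T).deriv, (hhighd T).deriv]; exact hder, cd1, cd2, cd3,
    ode1, ode2, hzero, hlim⟩
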